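/- arXiv:1311.4241 — 2 statements merged into one kernel-verified Lean document; each statement's English description precedes it below -/
import Mathlib

section
/- Let H = H₁ ⊕ ⋯ ⊕ H_p be block-diagonal with Hᵢ ∈ ℝ^{dᵢ×dᵢ} (τᵢ,ε)-conformal and τᵢ − ε > τ_{i+1} + ε for all i < p. Fix 1 ≤ r ≤ p, let t = d₁+⋯+d_r and Γ = Σ_{i=1}^r dᵢτᵢ. Then e₁∧⋯∧e_t is an eigenvector of the t-fold exterior power H^{∧t} whose eigenvalue has modulus at least exp(Γ − tε); moreover for any indices 1 ≤ i₁ < ⋯ < i_t ≤ d with (i₁,…,i_t) ≠ (1,…,t) (and r ≤ p−1), one has |H^{∧t}(e_{i₁}∧⋯∧e_{i_t})| ≤ exp(Γ + τ_{r+1} − τ_r + tε). -/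
open scoped BigOperators

noncomputable def svalList {n : Type*} [Fintype n] [DecidableEq n] (A : Matrix n n ℝ) : List ℝ :=
  ((Multiset.map (fun i => Real.sqrt ((Matrix.isHermitian_conjTranspose_mul_self A).eigenvalues i))
      Finset.univ.val).sort (· ≤ ·)).reverse

/-- `sval A j` is the `(j+1)`-th largest singular value `α_{j+1}(A)` (0-indexed). -/
noncomputable def sval {n : Type*} [Fintype n] [DecidableEq n] (A : Matrix n n ℝ) (j : ℕ) : ℝ :=
  (svalList A).getD j 0

/-- The `t`-th compound matrix: the matrix of the exterior power `A^{∧t}` in the orthonormal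
basis `{e_{i₁}∧⋯∧e_{i_t} : i₁ < ⋯ < i_t}` of `⋀^t ℝ^d` (entries are the `t×t` minors). -/
noncomputable def compound {d : ℕ} (t : ℕ) (A : Matrix (Fin d) (Fin d) ℝ) :
    Matrix {S : Finset (Fin d) // S.card = t} {S : Finset (Fin d) // S.card = t} ℝ :=
  fun S T => (A.submatrix (fun i => ((S.1.orderIsoOfFin S.2) i : Fin d))
    (fun j => ((T.1.orderIsoOfFin T.2) j : Fin d))).det

-- helper lemmas (to be concatenated after defs)

open Matrix in
lemma real_conjT {m n : Type*} (A : Matrix m n ℝ) : Aᴴ = Aᵀ := by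
  ext i j; simp [Matrix.conjTranspose_apply]

open Matrix in
/-- decomposition of quadratic form via spectral theorem -/
lemma dot_decomp {n : Type*} [Fintype n] [DecidableEq n] {A : Matrix n n ℝ}
    (hA : A.IsHermitian) (x : n → ℝ) :
    (x ⬝ᵥ A *ᵥ x = ∑ i, hA.eigenvalues i * ((star (hA.eigenvectorUnitary : Matrix n n ℝ) *ᵥ x) i)^2)
    ∧ x ⬝ᵥ x = ∑ i, ((star (hA.eigenvectorUnitary : Matrix n n ℝ) *ᵥ x) i)^2 := by
  set U : Matrix n n ℝ := (hA.eigenvectorUnitary : Matrix n n ℝ) with hU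
  set y : n → ℝ := star U *ᵥ x with hy
  have hyx : x ᵥ* U = y := by
    rw [hy, Matrix.star_eq_conjTranspose, real_conjT, Matrix.mulVec_transpose]
  have h1 : U * star U = 1 := (Matrix.mem_unitaryGroup_iff).mp hA.eigenvectorUnitary.2
  constructor
  · conv_lhs => rw [hA.spectral_theorem, Unitary.conjStarAlgAut_apply]
    rw [← Matrix.mulVec_mulVec, ← Matrix.mulVec_mulVec, Matrix.dotProduct_mulVec, hyx]
    simp only [← hy, Matrix.mulVec_diagonal, dotProduct]
    refine Finset.sum_congr rfl fun i _ => ?_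
    simp [Function.comp]; ring
  · have key : y ⬝ᵥ y = x ⬝ᵥ x := by
      calc y ⬝ᵥ y = (x ᵥ* U) ⬝ᵥ y := by rw [hyx]
      _ = x ⬝ᵥ (U *ᵥ y) := (Matrix.dotProduct_mulVec x U y).symm
      _ = x ⬝ᵥ ((U * star U) *ᵥ x) := by rw [hy, Matrix.mulVec_mulVec]
      _ = x ⬝ᵥ x := by rw [h1, Matrix.one_mulVec]
    rw [← key]
    simp only [dotProduct, sq]

open Matrix in
lemma qf_le_of_eig_le {n : Type*} [Fintype n] [DecidableEq n] {A : Matrix n n ℝ}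
    (hA : A.IsHermitian) {c : ℝ} (h : ∀ i, hA.eigenvalues i ≤ c) (x : n → ℝ) :
    x ⬝ᵥ A *ᵥ x ≤ c * (x ⬝ᵥ x) := by
  obtain ⟨h1, h2⟩ := dot_decomp hA x
  rw [h1, h2, Finset.mul_sum]
  exact Finset.sum_le_sum fun i _ => mul_le_mul_of_nonneg_right (h i) (sq_nonneg _)

open Matrix in
lemma eig_le_of_qf {n : Type*} [Fintype n] [DecidableEq n] {A : Matrix n n ℝ}
    (hA : A.IsHermitian) {c : ℝ} (h : ∀ x : n → ℝ, x ⬝ᵥ A *ᵥ x ≤ c * (x ⬝ᵥ x)) (i : n) :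
    hA.eigenvalues i ≤ c := by
  set v : n → ℝ := ⇑(hA.eigenvectorBasis i) with hv
  have hv1 : v ⬝ᵥ v = 1 := by
    have hn : ‖hA.eigenvectorBasis i‖ = 1 := hA.eigenvectorBasis.orthonormal.1 i
    rw [EuclideanSpace.norm_eq] at hn
    have h2 : ∑ j, ‖(hA.eigenvectorBasis i) j‖^2 = 1 := by
      have := congrArg (· ^ 2) hn
      simpa [Real.sq_sqrt (Finset.sum_nonneg fun j _ => sq_nonneg _)] using this
    simpa [dotProduct, Real.norm_eq_abs, sq_abs, sq] using h2
  have hAv : A *ᵥ v = hA.eigenvalues i • v := hA.mulVec_eigenvectorBasis i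
  have := h v
  rw [hAv, dotProduct_smul, hv1] at this
  simpa using this

lemma exists_sval_eq {n : ℕ} (A : Matrix (Fin n) (Fin n) ℝ) (i : Fin n) :
    ∃ j, j < n ∧ sval A j = Real.sqrt ((Matrix.isHermitian_conjTranspose_mul_self A).eigenvalues i) := by
  have hlen : (svalList A).length = n := by
    simp [svalList, Multiset.length_sort]
  have hmem : Real.sqrt ((Matrix.isHermitian_conjTranspose_mul_self A).eigenvalues i) ∈ svalList A := by
    simp only [svalList, List.mem_reverse, Multiset.mem_sort, Multiset.mem_map]
    exact ⟨i, by simp, rfl⟩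
  obtain ⟨j, hj, hget⟩ := List.mem_iff_getElem.mp hmem
  have hj' : j < n := hlen ▸ hj
  refine ⟨j, hj', ?_⟩
  rw [sval, List.getD_eq_getElem _ _ hj]
  exact hget

open Matrix in
lemma abs_det_eq_prod_sqrt {n : ℕ} (A : Matrix (Fin n) (Fin n) ℝ) :
    |A.det| = ∏ i, Real.sqrt ((Matrix.isHermitian_conjTranspose_mul_self A).eigenvalues i) := by
  have hH := Matrix.isHermitian_conjTranspose_mul_self A
  have hPSD : (Aᴴ * A).PosSemidef := Matrix.posSemidef_conjTranspose_mul_self A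
  have h1 : (Aᴴ * A).det = A.det ^ 2 := by rw [real_conjT, Matrix.det_mul, Matrix.det_transpose, sq]
  have h2 : (Aᴴ * A).det = ∏ i, hH.eigenvalues i := by
    simpa using hH.det_eq_prod_eigenvalues
  have h3 : ∏ i, hH.eigenvalues i = (∏ i, Real.sqrt (hH.eigenvalues i)) ^ 2 := by
    rw [← Finset.prod_pow]
    exact Finset.prod_congr rfl fun i _ => (Real.sq_sqrt (hPSD.eigenvalues_nonneg i)).symm
  have h4 : A.det ^ 2 = (∏ i, Real.sqrt (hH.eigenvalues i)) ^ 2 := by rw [← h1, h2, h3]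
  have h5 : 0 ≤ ∏ i, Real.sqrt (hH.eigenvalues i) :=
    Finset.prod_nonneg fun i _ => Real.sqrt_nonneg _
  calc |A.det| = Real.sqrt (A.det ^ 2) := (Real.sqrt_sq_eq_abs _).symm
  _ = Real.sqrt ((∏ i, Real.sqrt (hH.eigenvalues i)) ^ 2) := by rw [h4]
  _ = _ := Real.sqrt_sq h5

open Matrix in
lemma mulVec_sq_sum_le {n : ℕ} (A : Matrix (Fin n) (Fin n) ℝ) {c : ℝ} (hc0 : 0 ≤ c)
    (hc : ∀ j, j < n → sval A j ≤ c) (x : Fin n → ℝ) :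
    ∑ k, ((A *ᵥ x) k) ^ 2 ≤ c^2 * ∑ k, (x k)^2 := by
  have hH := Matrix.isHermitian_conjTranspose_mul_self A
  have hPSD : (Aᴴ * A).PosSemidef := Matrix.posSemidef_conjTranspose_mul_self A
  have heig : ∀ i, hH.eigenvalues i ≤ c^2 := by
    intro i
    obtain ⟨j, hj, hsv⟩ := exists_sval_eq A i
    have h1 : Real.sqrt (hH.eigenvalues i) ≤ c := hsv ▸ hc j hj
    have h0 : 0 ≤ hH.eigenvalues i := hPSD.eigenvalues_nonneg i
    nlinarith [Real.sq_sqrt h0, Real.sqrt_nonneg (hH.eigenvalues i)]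
  have hqf := qf_le_of_eig_le hH heig x
  have hAA : Aᴴ * A = Aᵀ * A := by rw [real_conjT]
  rw [hAA] at hqf
  have hdot : x ⬝ᵥ (Aᵀ * A) *ᵥ x = (A *ᵥ x) ⬝ᵥ (A *ᵥ x) := by
    rw [← Matrix.mulVec_mulVec, Matrix.dotProduct_mulVec, Matrix.vecMul_transpose]
  rw [hdot] at hqf
  calc ∑ k, ((A *ᵥ x) k) ^ 2 = (A *ᵥ x) ⬝ᵥ (A *ᵥ x) := by simp [dotProduct, sq]
  _ ≤ c^2 * (x ⬝ᵥ x) := hqf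
  _ = c^2 * ∑ k, (x k)^2 := by simp [dotProduct, sq]

open Matrix in
lemma psd_tmul {m n : Type*} [Fintype m] [Fintype n] [DecidableEq n] (C : Matrix m n ℝ) :
    (Cᵀ * C).PosSemidef := by
  have := Matrix.posSemidef_conjTranspose_mul_self C
  rwa [real_conjT] at this

open Matrix in
lemma psd_det_nonneg {κ : Type*} [Fintype κ] [DecidableEq κ] {G : Matrix κ κ ℝ}
    (hG : G.PosSemidef) : 0 ≤ G.det := by
  rw [show G.det = ∏ i, hG.1.eigenvalues i from by simpa using hG.1.det_eq_prod_eigenvalues]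
  exact Finset.prod_nonneg fun i _ => hG.eigenvalues_nonneg i

open Matrix in
lemma dot_tmul {m n : Type*} [Fintype m] [Fintype n] (C : Matrix m n ℝ) (y : n → ℝ) :
    y ⬝ᵥ (Cᵀ * C) *ᵥ y = ∑ x, ((C *ᵥ y) x) ^ 2 := by
  rw [← Matrix.mulVec_mulVec, Matrix.dotProduct_mulVec, Matrix.vecMul_transpose]
  simp [dotProduct, sq]

open Matrix in
lemma det_psd_le {κ : Type*} [Fintype κ] [DecidableEq κ] {G : Matrix κ κ ℝ}
    (hG : G.PosSemidef) {c2 : ℝ}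
    (h : ∀ x : κ → ℝ, x ⬝ᵥ G *ᵥ x ≤ c2 * (x ⬝ᵥ x)) :
    G.det ≤ c2 ^ (Fintype.card κ) := by
  rw [show G.det = ∏ i, hG.1.eigenvalues i from by simpa using hG.1.det_eq_prod_eigenvalues]
  calc ∏ i, hG.1.eigenvalues i ≤ ∏ _i : κ, c2 :=
        Finset.prod_le_prod (fun i _ => hG.eigenvalues_nonneg i)
          (fun i _ => eig_le_of_qf hG.1 h i)
  _ = c2 ^ (Fintype.card κ) := by simp [Finset.prod_const, Finset.card_univ]

lemma sum_of_support_inj {α β : Type*} [Fintype α] [Fintype β] [DecidableEq β]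
    (f : α → β) (hf : Function.Injective f) (F : β → ℝ)
    (h0 : ∀ b, (∀ a, f a ≠ b) → F b = 0) : ∑ b, F b = ∑ a, F (f a) := by
  rw [← Finset.sum_image (f := F) (g := f) (fun a _ b _ hab => hf hab)]
  refine (Finset.sum_subset (Finset.subset_univ _) fun b _ hb => ?_).symm
  refine h0 b fun a hab => hb ?_
  exact hab ▸ Finset.mem_image_of_mem f (Finset.mem_univ a)

lemma ext_sum_sq {α β : Type*} [Fintype α] [Fintype β] [DecidableEq β]
    (f : α → β) (hf : Function.Injective f) (y : α → ℝ) :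
    (∑ b, (∑ a, if f a = b then y a else 0) ^ 2) = ∑ a, (y a) ^ 2 := by
  rw [sum_of_support_inj f hf _ (fun b hb => by
    rw [Finset.sum_eq_zero fun a _ => if_neg (hb a)]; norm_num)]
  refine Finset.sum_congr rfl fun a _ => ?_
  congr 1
  rw [Finset.sum_eq_single a (fun a' _ hne => if_neg fun h => hne (hf h)) (by simp)]
  simp

open Matrix Equiv Finset Function in
lemma det_sq_eq_sum_perm {t : ℕ} (C : Matrix (Fin t) (Fin t) ℝ) :
    C.det ^ 2 = ∑ σ : Perm (Fin t), (C.submatrix σ id).det * ∏ i, C (σ i) i := by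
  simp_rw [Matrix.det_permute, mul_assoc, mul_left_comm _ C.det]
  rw [← Finset.mul_sum, ← det_apply', sq]

lemma mono_range {N t : ℕ} (S : {S : Finset (Fin N) // S.card = t}) (x : Fin N) :
    x ∈ S.1 ↔ ∃ a, ((S.1.orderIsoOfFin S.2) a : Fin N) = x := by
  constructor
  · intro hx
    exact ⟨(S.1.orderIsoOfFin S.2).symm ⟨x, hx⟩,
      congrArg Subtype.val ((S.1.orderIsoOfFin S.2).apply_symm_apply ⟨x, hx⟩)⟩
  · rintro ⟨a, rfl⟩; exact ((S.1.orderIsoOfFin S.2) a).2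

set_option maxHeartbeats 1000000 in
open Matrix Equiv Finset Function in
lemma cauchy_binet {N t : ℕ} (B : Matrix (Fin N) (Fin t) ℝ) :
    (Bᵀ * B).det = ∑ S : {S : Finset (Fin N) // S.card = t},
      (B.submatrix (fun a => ((S.1.orderIsoOfFin S.2) a : Fin N)) id).det ^ 2 := by
  classical
  set mono : {S : Finset (Fin N) // S.card = t} → Fin t → Fin N :=
    fun S a => ((S.1.orderIsoOfFin S.2) a : Fin N) with hmono
  have mono_inj : ∀ S, Function.Injective (mono S) := fun S a b hab => by
    exact (S.1.orderIsoOfFin S.2).injective (Subtype.coe_injective hab)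
  have mono_mem : ∀ S a, mono S a ∈ S.1 := fun S a => ((S.1.orderIsoOfFin S.2) a).2
  have mono_range' : ∀ S (x : Fin N), x ∈ S.1 ↔ ∃ a, mono S a = x := fun S x => mono_range S x
  have step1 : (Bᵀ * B).det
      = ∑ p : Fin t → Fin N, ∑ σ : Perm (Fin t),
          ((Perm.sign σ : ℤ) : ℝ) * ∏ i, B (p i) (σ i) * B (p i) i := by
    simp only [det_apply', mul_apply, transpose_apply, prod_univ_sum, mul_sum,
      Fintype.piFinset_univ]
    rw [Finset.sum_comm]
  have step2 : ∀ p : Fin t → Fin N,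
      (∑ σ : Perm (Fin t), ((Perm.sign σ : ℤ) : ℝ) * ∏ i, B (p i) (σ i) * B (p i) i)
      = (B.submatrix p id).det * ∏ i, B (p i) i := by
    intro p
    have : ∀ σ : Perm (Fin t), (∏ i, B (p i) (σ i) * B (p i) i)
        = (∏ i, B (p i) (σ i)) * ∏ i, B (p i) i := fun σ => Finset.prod_mul_distrib
    simp_rw [this, ← mul_assoc, ← Finset.sum_mul]
    congr 1
    have := det_apply' (B.submatrix p id)ᵀ
    rw [det_transpose] at this
    rw [this]
    rfl
  rw [step1]
  simp_rw [step2]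
  rw [← Finset.sum_filter_of_ne (p := fun p : Fin t → Fin N => Function.Injective p)
    (fun p _ hne => by
      by_contra hpi
      apply hne
      rw [Function.not_injective_iff] at hpi
      obtain ⟨i, j, hpij, hij⟩ := hpi
      rw [det_zero_of_row_eq hij (funext fun k => by simp [hpij]), zero_mul])]
  have inner : ∀ S : {S : Finset (Fin N) // S.card = t},
      (B.submatrix (mono S) id).det ^ 2
      = ∑ σ : Perm (Fin t), (B.submatrix (mono S ∘ σ) id).det * ∏ i, B (mono S (σ i)) i := by
    intro S
    rw [det_sq_eq_sum_perm]
    refine Finset.sum_congr rfl fun σ _ => ?_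
    rw [Matrix.submatrix_submatrix]
    rfl
  rw [Finset.sum_congr rfl fun S _ => inner S]
  rw [show (∑ S : {S : Finset (Fin N) // S.card = t}, ∑ σ : Perm (Fin t),
        (B.submatrix (mono S ∘ σ) id).det * ∏ i, B (mono S (σ i)) i)
      = ∑ q : {S : Finset (Fin N) // S.card = t} × Perm (Fin t),
        (B.submatrix (mono q.1 ∘ q.2) id).det * ∏ i, B (mono q.1 (q.2 i)) i from
    (Fintype.sum_prod_type (fun q : {S : Finset (Fin N) // S.card = t} × Perm (Fin t) =>
      (B.submatrix (mono q.1 ∘ q.2) id).det * ∏ i, B (mono q.1 (q.2 i)) i)).symm]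
  refine (Finset.sum_bij (fun (q : {S : Finset (Fin N) // S.card = t} × Perm (Fin t)) _ =>
    mono q.1 ∘ q.2) ?_ ?_ ?_ ?_).symm
  · intro q _
    refine Finset.mem_filter.mpr ⟨Finset.mem_univ _, (mono_inj q.1).comp q.2.injective⟩
  · rintro ⟨S, σ⟩ _ ⟨S', σ'⟩ _ heq
    have hrange : ∀ x : Fin N, x ∈ S.1 ↔ x ∈ S'.1 := by
      intro x
      rw [mono_range', mono_range']
      constructor
      · rintro ⟨a, rfl⟩
        refine ⟨σ' (σ.symm a), ?_⟩
        have := congrFun heq (σ.symm a)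
        simpa using this.symm
      · rintro ⟨a, rfl⟩
        refine ⟨σ (σ'.symm a), ?_⟩
        have := congrFun heq (σ'.symm a)
        simpa using this
    have hS : S = S' := Subtype.ext (Finset.ext hrange)
    cases hS
    have hσ : σ = σ' := by
      ext a
      have h := mono_inj S (congrFun heq a)
      exact congrArg Fin.val h
    rw [hσ]
  · intro p hp
    have hpinj : Function.Injective p := (Finset.mem_filter.mp hp).2
    have hcard : (Finset.univ.image p).card = t := by
      rw [Finset.card_image_of_injective _ hpinj]; simp
    set S : {S : Finset (Fin N) // S.card = t} := ⟨Finset.univ.image p, hcard⟩ with hS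
    have hmem : ∀ a, p a ∈ S.1 := fun a => Finset.mem_image_of_mem p (Finset.mem_univ a)
    set σ : Fin t → Fin t := fun a => (S.1.orderIsoOfFin S.2).symm ⟨p a, hmem a⟩ with hσ
    have hσinj : Function.Injective σ := by
      intro a b hab
      apply hpinj
      have := congrArg (fun z => ((S.1.orderIsoOfFin S.2) z : Fin N)) hab
      simpa [hσ] using this
    refine ⟨⟨S, Equiv.ofBijective σ (Finite.injective_iff_bijective.mp hσinj)⟩,
      Finset.mem_univ _, ?_⟩
    funext a
    simp only [hmono, Function.comp_apply, Equiv.ofBijective_apply, hσ]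
    exact congrArg Subtype.val ((S.1.orderIsoOfFin S.2).apply_symm_apply ⟨p a, hmem a⟩)
  · intro q _
    rfl

open Matrix in
lemma clm_single_apply {κ : Type*} [Fintype κ] [DecidableEq κ] (C : Matrix κ κ ℝ) (J S : κ) :
    (Matrix.toEuclideanCLM (𝕜 := ℝ) C (EuclideanSpace.single J 1)) S = C S J := by
  have h := Matrix.ofLp_toEuclideanCLM (𝕜 := ℝ) (n := κ) C (EuclideanSpace.single J 1)
  have h2 := congrFun (congrArg (fun v : κ → ℝ => v) h) S
  rw [PiLp.ofLp_single, Matrix.mulVec_single] at h2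
  simpa using h2

lemma sigma_reconstruct {p : ℕ} {d : Fin p → ℕ} (x : Σ i : Fin p, Fin (d i)) (i : Fin p)
    (h : x.1 = i) : x = ⟨i, Fin.cast (congrArg d h) x.2⟩ := by
  rcases x with ⟨x1, x2⟩
  subst h
  rfl

set_option maxHeartbeats 2000000 in
/-- Let `H = H₁ ⊕ ⋯ ⊕ H_p` be block-diagonal (realized on `Fin (Σdᵢ)` via an
order-preserving identification `e`), with `Hᵢ` `(τᵢ,ε)`-conformal and `τᵢ − ε > τ_{i+1} + ε`.
For `t = d₁+⋯+d_r` and `Γ = Σ_{i≤r} dᵢτᵢ`, the wedge `e₁∧⋯∧e_t` (the basis vector of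
`⋀^t ℝ^d` indexed by `{0,…,t−1}`) is an eigenvector of `H^{∧t}` with eigenvalue of modulus at
least `exp(Γ − tε)`; and for any other basis vector `e_{i₁}∧⋯∧e_{i_t}` (when `r ≤ p−1`),
`|H^{∧t}(e_{i₁}∧⋯∧e_{i_t})| ≤ exp(Γ + τ_{r+1} − τ_r + tε)`. -/
theorem wedge_blockDiagonal_eigen {p : ℕ} (d : Fin p → ℕ)
    (H : (i : Fin p) → Matrix (Fin (d i)) (Fin (d i)) ℝ) (τ : Fin p → ℝ) (ε : ℝ) (hε : 0 ≤ ε)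
    (hconf : ∀ i : Fin p, ∀ j : ℕ, j < d i →
      sval (H i) j ∈ Set.Icc (Real.exp (τ i - ε)) (Real.exp (τ i + ε)))
    (hgap : ∀ i : Fin p, ∀ h : (i : ℕ) + 1 < p, τ ⟨(i : ℕ) + 1, h⟩ + ε < τ i - ε)
    (e : (Σ i : Fin p, Fin (d i)) ≃ Fin (∑ i, d i))
    (he : ∀ a b : Σ i : Fin p, Fin (d i),
      (a.1 < b.1 ∨ (a.1 = b.1 ∧ (a.2 : ℕ) ≤ (b.2 : ℕ))) → e a ≤ e b)
    (r : Fin p)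
    (t : ℕ) (ht : t = ∑ i ∈ Finset.univ.filter (fun i => i ≤ r), d i)
    (Γ : ℝ) (hΓ : Γ = ∑ i ∈ Finset.univ.filter (fun i => i ≤ r), (d i : ℝ) * τ i) :
    (∀ I : {S : Finset (Fin (∑ i, d i)) // S.card = t},
      I.1 = Finset.univ.filter (fun j : Fin (∑ i, d i) => (j : ℕ) < t) →
      ∃ μ : ℝ, Real.exp (Γ - t * ε) ≤ |μ| ∧
        Matrix.toEuclideanCLM (𝕜 := ℝ)
            (compound t ((Matrix.reindex e e) (Matrix.blockDiagonal' H)))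
            (EuclideanSpace.single I 1) = μ • EuclideanSpace.single I 1) ∧
    (∀ hr : (r : ℕ) + 1 < p, ∀ I : {S : Finset (Fin (∑ i, d i)) // S.card = t},
      I.1 ≠ Finset.univ.filter (fun j : Fin (∑ i, d i) => (j : ℕ) < t) →
      ‖Matrix.toEuclideanCLM (𝕜 := ℝ)
          (compound t ((Matrix.reindex e e) (Matrix.blockDiagonal' H)))
          (EuclideanSpace.single I 1)‖ ≤
        Real.exp (Γ + τ ⟨(r : ℕ) + 1, hr⟩ - τ r + t * ε)) := by
  classical
  set M : Matrix (Fin (∑ i, d i)) (Fin (∑ i, d i)) ℝ :=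
    (Matrix.reindex e e) (Matrix.blockDiagonal' H) with hMdef
  have hM : ∀ j k, M j k = Matrix.blockDiagonal' H (e.symm j) (e.symm k) := by
    intro j k; rw [hMdef]; rfl
  have hM0 : ∀ j k, (e.symm j).1 ≠ (e.symm k).1 → M j k = 0 := by
    intro j k hne
    rw [hM, Matrix.blockDiagonal'_apply, dif_neg hne]
  have hMe : ∀ (i : Fin p) (s b : Fin (d i)), M (e ⟨i, s⟩) (e ⟨i, b⟩) = H i s b := by
    intro i s b
    rw [hM, Equiv.symm_apply_apply, Equiv.symm_apply_apply]
    simp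
  have hlt : ∀ a b : Σ i : Fin p, Fin (d i),
      (a.1 < b.1 ∨ (a.1 = b.1 ∧ (a.2 : ℕ) < (b.2 : ℕ))) → e a < e b := by
    intro a b hab
    have hle : e a ≤ e b := he a b (by
      rcases hab with h | ⟨h1, h2⟩
      · exact Or.inl h
      · exact Or.inr ⟨h1, le_of_lt h2⟩)
    refine lt_of_le_of_ne hle fun hh => ?_
    have hab' : a = b := e.injective hh
    subst hab'
    rcases hab with h | ⟨h1, h2⟩
    · exact lt_irrefl _ h
    · exact lt_irrefl _ h2
  have hsep : ∀ x y : Fin (∑ i, d i), (e.symm x).1 ≤ r → ¬((e.symm y).1 ≤ r) → x < y := by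
    intro x y hx hy
    have := hlt (e.symm x) (e.symm y) (Or.inl (lt_of_le_of_lt hx (lt_of_not_ge hy)))
    simpa using this
  set Bset : Finset (Fin (∑ i, d i)) :=
    Finset.univ.filter (fun j : Fin (∑ i, d i) => (j : ℕ) < t) with hBset
  set Aset : Finset (Fin (∑ i, d i)) :=
    Finset.univ.filter (fun j => (e.symm j).1 ≤ r) with hAset
  have htN : t ≤ ∑ i, d i := by
    rw [ht]; exact Finset.sum_le_sum_of_subset (Finset.filter_subset _ _)
  have hAcard : Aset.card = t := by
    have h1 : Aset.card = Fintype.card {j : Fin (∑ i, d i) // (e.symm j).1 ≤ r} :=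
      (Fintype.card_subtype _).symm
    have h2 : Fintype.card {j : Fin (∑ i, d i) // (e.symm j).1 ≤ r}
        = Fintype.card {a : Σ i : Fin p, Fin (d i) // a.1 ≤ r} :=
      Fintype.card_congr (e.symm.subtypeEquiv (fun j => Iff.rfl))
    have e3 : {a : Σ i : Fin p, Fin (d i) // a.1 ≤ r} ≃ Σ i : {i : Fin p // i ≤ r}, Fin (d i.1) :=
      { toFun := fun x => ⟨⟨x.1.1, x.2⟩, x.1.2⟩
        invFun := fun y => ⟨⟨y.1.1, y.2⟩, y.1.2⟩
        left_inv := fun x => by rcases x with ⟨⟨i, b⟩, h⟩; rfl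
        right_inv := fun y => by rcases y with ⟨⟨i, h⟩, b⟩; rfl }
    have h3 := Fintype.card_congr e3
    have h4 : Fintype.card (Σ i : {i : Fin p // i ≤ r}, Fin (d i.1))
        = ∑ i : {i : Fin p // i ≤ r}, d i.1 := by
      rw [Fintype.card_sigma]
      simp
    have h5 : (∑ i : {i : Fin p // i ≤ r}, d i.1)
        = ∑ i ∈ Finset.univ.filter (fun i => i ≤ r), d i :=
      (Finset.sum_subtype (Finset.univ.filter (fun i => i ≤ r))
        (p := fun i => i ≤ r) (by intro x; simp) (fun i => d i)).symm
    rw [h1, h2, h3, h4, h5, ← ht]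
  have hABsub : Aset ⊆ Bset := by
    intro j hj
    have hjA : (e.symm j).1 ≤ r := by simpa [hAset] using hj
    have hsub : Finset.Iic j ⊆ Aset := by
      intro z hz
      by_contra hzA
      have hz' : ¬((e.symm z).1 ≤ r) := by simpa [hAset] using hzA
      exact absurd (Finset.mem_Iic.mp hz) (not_le.mpr (hsep j z hjA hz'))
    have hcard := Finset.card_le_card hsub
    rw [Fin.card_Iic, hAcard] at hcard
    simp only [hBset, Finset.mem_filter, Finset.mem_univ, true_and]
    omega
  have hBcard : Bset.card = t := by
    have : Bset = Finset.map (Fin.castLEEmb htN) Finset.univ := by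
      ext j
      simp only [hBset, Finset.mem_filter, Finset.mem_univ, true_and, Finset.mem_map]
      constructor
      · intro hj
        refine ⟨⟨(j : ℕ), hj⟩, ?_⟩
        apply Fin.ext
        simp
      · rintro ⟨a, rfl⟩
        exact a.isLt
    rw [this, Finset.card_map, Finset.card_univ, Fintype.card_fin]
  have hAB : Aset = Bset :=
    Finset.eq_of_subset_of_card_le hABsub (by rw [hAcard, hBcard])
  have hE2 : ∀ j : Fin (∑ i, d i), ((e.symm j).1 ≤ r ↔ (j : ℕ) < t) := by
    intro j
    constructor
    · intro h
      have hmem : j ∈ Aset := by simp [hAset, h]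
      rw [hAB] at hmem
      simpa [hBset] using hmem
    · intro h
      have hmem : j ∈ Bset := by simp [hBset, h]
      rw [← hAB] at hmem
      simpa [hAset] using hmem
  constructor
  · -- Part 1
    intro I hI
    set monoI : Fin t → Fin (∑ i, d i) :=
      fun a => ((I.1.orderIsoOfFin I.2) a : Fin (∑ i, d i)) with hmonoI
    have hmonoI_mem : ∀ a, monoI a ∈ I.1 := fun a => ((I.1.orderIsoOfFin I.2) a).2
    have hzero : ∀ S, S ≠ I → compound t M S I = 0 := by
      intro S hS
      have hSne : ¬ (S.1 ⊆ I.1) := by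
        intro hsub
        exact hS (Subtype.ext (Finset.eq_of_subset_of_card_le hsub (by rw [S.2, I.2])))
      obtain ⟨x, hxS, hxI⟩ := Finset.not_subset.mp hSne
      obtain ⟨a, ha⟩ := (mono_range S x).mp hxS
      show (M.submatrix (fun a => ((S.1.orderIsoOfFin S.2) a : Fin (∑ i, d i)))
        (fun b => ((I.1.orderIsoOfFin I.2) b : Fin (∑ i, d i)))).det = 0
      apply Matrix.det_eq_zero_of_row_eq_zero a
      intro b
      rw [Matrix.submatrix_apply]
      apply hM0
      have hcol_mem : ((I.1.orderIsoOfFin I.2) b : Fin (∑ i, d i)) ∈ Bset := by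
        rw [← hI]; exact hmonoI_mem b
      have hcol_lt : (((I.1.orderIsoOfFin I.2) b : Fin (∑ i, d i)) : ℕ) < t := by
        simpa [hBset] using hcol_mem
      have hcol_le := (hE2 _).mpr hcol_lt
      intro heq
      have hrow_le : (e.symm ((S.1.orderIsoOfFin S.2) a : Fin (∑ i, d i))).1 ≤ r :=
        heq ▸ hcol_le
      have : (x : ℕ) < t := (hE2 x).mp (ha ▸ hrow_le)
      exact hxI (by rw [hI]; simp [hBset, this])
    refine ⟨compound t M I I, ?_, ?_⟩
    · -- lower bound
      set g0 : Fin t → Fin p := fun a => (e.symm (monoI a)).1 with hg0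
      have hg0_le : ∀ a, g0 a ≤ r := by
        intro a
        refine (hE2 _).mpr ?_
        have := hmonoI_mem a
        rw [hI] at this
        simpa [hBset] using this
      set D : Matrix (Fin t) (Fin t) ℝ := M.submatrix monoI monoI with hD
      have hBT : D.BlockTriangular g0 := by
        intro a b hba
        exact hM0 _ _ (ne_of_gt hba)
      have hdet1 : D.det = ∏ i : Fin p, (D.toSquareBlock g0 i).det := hBT.det_fintype
      set snd : ∀ i : Fin p, {a : Fin t // g0 a = i} → Fin (d i) :=
        fun i a => Fin.cast (congrArg d a.2) ((e.symm (monoI a.1)).2) with hsnddef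
      have hsnd : ∀ (i : Fin p) (a : {a : Fin t // g0 a = i}),
          monoI a.1 = e ⟨i, snd i a⟩ := by
        intro i a
        have h1 : e.symm (monoI a.1) = ⟨i, snd i a⟩ := sigma_reconstruct _ i a.2
        rw [← h1, Equiv.apply_symm_apply]
      have hmonoI_inj : Function.Injective monoI := fun a b hab =>
        (I.1.orderIsoOfFin I.2).injective (Subtype.coe_injective hab)
      have hsnd_inj : ∀ i, Function.Injective (snd i) := by
        intro i a b hab
        have h1 : monoI a.1 = monoI b.1 := by rw [hsnd i a, hsnd i b, hab]
        exact Subtype.ext (hmonoI_inj h1)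
      have hsnd_surj : ∀ i : Fin p, i ≤ r → Function.Surjective (snd i) := by
        intro i hi b
        have hjmem : e ⟨i, b⟩ ∈ Bset := by
          simp only [hBset, Finset.mem_filter, Finset.mem_univ, true_and]
          exact (hE2 (e ⟨i, b⟩)).mp (by rw [Equiv.symm_apply_apply]; exact hi)
        rw [← hI] at hjmem
        obtain ⟨a, ha⟩ := (mono_range I _).mp hjmem
        have ha' : monoI a = e ⟨i, b⟩ := ha
        have hga : g0 a = i := by
          rw [hg0]
          simp only [ha', Equiv.symm_apply_apply]
        refine ⟨⟨a, hga⟩, ?_⟩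
        have h1 := hsnd i ⟨a, hga⟩
        rw [ha'] at h1
        have h3 : (⟨i, b⟩ : Σ i : Fin p, Fin (d i)) = ⟨i, snd i ⟨a, hga⟩⟩ := e.injective h1
        simpa using h3.symm
      have hblockdet : ∀ i : Fin p, i ≤ r → (D.toSquareBlock g0 i).det = (H i).det := by
        intro i hi
        have hbij : Function.Bijective (snd i) := ⟨hsnd_inj i, hsnd_surj i hi⟩
        have hkey : D.toSquareBlock g0 i
            = (H i).submatrix (Equiv.ofBijective _ hbij) (Equiv.ofBijective _ hbij) := by
          ext a b
          show M (monoI a.1) (monoI b.1) = H i (snd i a) (snd i b)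
          rw [hsnd i a, hsnd i b, hMe]
        rw [hkey, Matrix.det_submatrix_equiv_self]
      have hblockone : ∀ i : Fin p, ¬(i ≤ r) → (D.toSquareBlock g0 i).det = 1 := by
        intro i hi
        haveI : IsEmpty {a : Fin t // g0 a = i} := ⟨fun a => hi (a.2 ▸ hg0_le a.1)⟩
        exact Matrix.det_isEmpty
      have hmu : compound t M I I = ∏ i ∈ Finset.univ.filter (fun i => i ≤ r), (H i).det := by
        show D.det = _
        rw [hdet1, Finset.prod_filter]
        refine Finset.prod_congr rfl fun i _ => ?_
        by_cases hi : i ≤ r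
        · rw [if_pos hi, hblockdet i hi]
        · rw [if_neg hi, hblockone i hi]
      have hdetlb : ∀ i : Fin p, Real.exp ((d i : ℝ) * (τ i - ε)) ≤ |(H i).det| := by
        intro i
        rw [abs_det_eq_prod_sqrt]
        have hlb : ∀ s : Fin (d i), Real.exp (τ i - ε)
            ≤ Real.sqrt ((Matrix.isHermitian_conjTranspose_mul_self (H i)).eigenvalues s) := by
          intro s
          obtain ⟨j, hj, hsv⟩ := exists_sval_eq (H i) s
          rw [← hsv]
          exact (hconf i j hj).1
        calc Real.exp ((d i : ℝ) * (τ i - ε)) = (Real.exp (τ i - ε)) ^ (d i) := by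
              rw [← Real.exp_nat_mul]
        _ = ∏ _s : Fin (d i), Real.exp (τ i - ε) := by simp [Finset.prod_const]
        _ ≤ _ := Finset.prod_le_prod (fun _ _ => (Real.exp_pos _).le) (fun s _ => hlb s)
      have hexp : Real.exp (Γ - t * ε)
          = ∏ i ∈ Finset.univ.filter (fun i => i ≤ r), Real.exp ((d i : ℝ) * (τ i - ε)) := by
        rw [← Real.exp_sum]
        congr 1
        have hsplit : ∀ i : Fin p, (d i : ℝ) * (τ i - ε) = (d i : ℝ) * τ i - (d i : ℝ) * ε :=
          fun i => mul_sub _ _ _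
        simp_rw [hsplit]
        rw [Finset.sum_sub_distrib, ← Finset.sum_mul, hΓ, ht]
        push_cast
        ring
      calc Real.exp (Γ - t * ε)
          = ∏ i ∈ Finset.univ.filter (fun i => i ≤ r), Real.exp ((d i : ℝ) * (τ i - ε)) := hexp
      _ ≤ ∏ i ∈ Finset.univ.filter (fun i => i ≤ r), |(H i).det| :=
          Finset.prod_le_prod (fun _ _ => (Real.exp_pos _).le) (fun i _ => hdetlb i)
      _ = |∏ i ∈ Finset.univ.filter (fun i => i ≤ r), (H i).det| := (Finset.abs_prod _ _).symm
      _ = |compound t M I I| := by rw [hmu]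
    · -- eigenvector equation
      ext S
      rw [clm_single_apply]
      by_cases hS : S = I
      · subst hS
        simp [EuclideanSpace.single_apply]
      · rw [hzero S hS]
        simp [EuclideanSpace.single_apply, hS]
  · -- Part 2
    intro hr I hI
    set monoI : Fin t → Fin (∑ i, d i) :=
      fun a => ((I.1.orderIsoOfFin I.2) a : Fin (∑ i, d i)) with hmonoI
    have hmonoI_mem : ∀ a, monoI a ∈ I.1 := fun a => ((I.1.orderIsoOfFin I.2) a).2
    have hmonoI_inj : Function.Injective monoI := fun a b hab =>
      (I.1.orderIsoOfFin I.2).injective (Subtype.coe_injective hab)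
    set g0 : Fin t → Fin p := fun a => (e.symm (monoI a)).1 with hg0
    set snd : ∀ i : Fin p, {a : Fin t // g0 a = i} → Fin (d i) :=
      fun i a => Fin.cast (congrArg d a.2) ((e.symm (monoI a.1)).2) with hsnddef
    have hsnd : ∀ (i : Fin p) (a : {a : Fin t // g0 a = i}),
        monoI a.1 = e ⟨i, snd i a⟩ := by
      intro i a
      have h1 : e.symm (monoI a.1) = ⟨i, snd i a⟩ := sigma_reconstruct _ i a.2
      rw [← h1, Equiv.apply_symm_apply]
    have hsnd_inj : ∀ i, Function.Injective (snd i) := by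
      intro i a b hab
      have h1 : monoI a.1 = monoI b.1 := by rw [hsnd i a, hsnd i b, hab]
      exact Subtype.ext (hmonoI_inj h1)
    -- norm as sqrt of sum of squared minors
    have hnorm : ‖Matrix.toEuclideanCLM (𝕜 := ℝ) (compound t M) (EuclideanSpace.single I 1)‖
        = Real.sqrt (∑ S : {S : Finset (Fin (∑ i, d i)) // S.card = t}, (compound t M S I)^2) := by
      rw [EuclideanSpace.norm_eq]
      congr 1
      refine Finset.sum_congr rfl fun S _ => ?_
      rw [clm_single_apply]
      simp [Real.norm_eq_abs, sq_abs]
    set Bm : Matrix (Fin (∑ i, d i)) (Fin t) ℝ := M.submatrix id monoI with hBm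
    have hsum : (∑ S : {S : Finset (Fin (∑ i, d i)) // S.card = t}, (compound t M S I)^2)
        = (Bm.transpose * Bm).det := by
      rw [cauchy_binet Bm]
      exact Finset.sum_congr rfl fun S _ => rfl
    set G : Matrix (Fin t) (Fin t) ℝ := Bm.transpose * Bm with hG
    have hGBT : G.BlockTriangular g0 := by
      intro a b hba
      show (Bm.transpose * Bm) a b = 0
      rw [Matrix.mul_apply]
      refine Finset.sum_eq_zero fun x _ => ?_
      by_cases hx : (e.symm x).1 = g0 a
      · have h2 : M x (monoI b) = 0 := hM0 _ _ (by rw [hx]; exact (ne_of_gt hba))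
        show M x (monoI a) * M x (monoI b) = 0
        rw [h2, mul_zero]
      · show M x (monoI a) * M x (monoI b) = 0
        rw [hM0 _ _ hx, zero_mul]
    have hdet2 : G.det = ∏ i : Fin p, (G.toSquareBlock g0 i).det := hGBT.det_fintype
    set k : Fin p → ℕ := fun i => Fintype.card {a : Fin t // g0 a = i} with hk
    -- per-block Gram matrices
    set Ci : ∀ iv : Fin p, Matrix (Fin (∑ i, d i)) {a : Fin t // g0 a = iv} ℝ :=
      fun iv => M.submatrix id (fun a => monoI a.1) with hCi
    have hGi : ∀ i, G.toSquareBlock g0 i = (Ci i).transpose * (Ci i) := by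
      intro i
      ext a b
      show (Bm.transpose * Bm) a.1 b.1 = ((Ci i).transpose * (Ci i)) a b
      rw [Matrix.mul_apply, Matrix.mul_apply]
      exact Finset.sum_congr rfl fun x _ => rfl
    have hQF : ∀ i : Fin p, ∀ y : {a : Fin t // g0 a = i} → ℝ,
        dotProduct y (Matrix.mulVec ((Ci i).transpose * (Ci i)) y) ≤ (Real.exp (τ i + ε))^2 * (dotProduct y y) := by
      intro i y
      rw [dot_tmul]
      set z : Fin (d i) → ℝ :=
        fun b => ∑ a : {a : Fin t // g0 a = i}, if snd i a = b then y a else 0 with hz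
      have hein : Function.Injective (fun s : Fin (d i) => e ⟨i, s⟩) := by
        intro s s' hss
        have := e.injective hss
        simpa using this
      have hsupp : ∀ x, (∀ s : Fin (d i), e ⟨i, s⟩ ≠ x) → (Matrix.mulVec (Ci i) y) x = 0 := by
        intro x hx
        have hbx : (e.symm x).1 ≠ i := by
          intro hcon
          exact hx (Fin.cast (congrArg d hcon) (e.symm x).2)
            (by rw [← sigma_reconstruct (e.symm x) i hcon, Equiv.apply_symm_apply])
        show ∑ a : {a : Fin t // g0 a = i}, M x (monoI a.1) * y a = 0
        refine Finset.sum_eq_zero fun a _ => ?_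
        have : (e.symm x).1 ≠ (e.symm (monoI a.1)).1 := by
          rw [show (e.symm (monoI a.1)).1 = g0 a.1 from rfl, a.2]
          exact hbx
        rw [hM0 _ _ this, zero_mul]
      have hstep : ∀ s : Fin (d i), (Matrix.mulVec (Ci i) y) (e ⟨i, s⟩) = (Matrix.mulVec (H i) z) s := by
        intro s
        show (∑ a : {a : Fin t // g0 a = i}, M (e ⟨i, s⟩) (monoI a.1) * y a)
          = ∑ b, H i s b * z b
        have lhs : ∀ a : {a : Fin t // g0 a = i},
            M (e ⟨i, s⟩) (monoI a.1) = H i s (snd i a) := fun a => by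
          rw [hsnd i a, hMe]
        simp_rw [lhs, hz, Finset.mul_sum, mul_ite, mul_zero]
        rw [Finset.sum_comm]
        refine Finset.sum_congr rfl fun a _ => ?_
        rw [Finset.sum_ite_eq Finset.univ (snd i a) (fun b => H i s b * y a)]
        simp
      have hcalc : (∑ x, ((Matrix.mulVec (Ci i) y) x)^2) = ∑ s : Fin (d i), ((Matrix.mulVec (H i) z) s)^2 := by
        rw [sum_of_support_inj (fun s : Fin (d i) => e ⟨i, s⟩) hein
          (fun x => ((Matrix.mulVec (Ci i) y) x)^2) (fun x hx => by
            show ((Matrix.mulVec (Ci i) y) x)^2 = 0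
            rw [hsupp x hx]; norm_num)]
        exact Finset.sum_congr rfl fun s _ => by rw [hstep]
      have hHbound := mulVec_sq_sum_le (H i) (Real.exp_pos (τ i + ε)).le
        (fun j hj => (hconf i j hj).2) z
      have hzsum : ∑ b, (z b)^2 = ∑ a, (y a)^2 := ext_sum_sq (snd i) (hsnd_inj i) y
      have hyy : dotProduct y y = ∑ a, (y a)^2 := by simp [dotProduct, sq]
      rw [hcalc, hyy]
      rw [hzsum] at hHbound
      exact hHbound
    have hdetGi : ∀ i, (G.toSquareBlock g0 i).det ≤ ((Real.exp (τ i + ε))^2) ^ (k i) := by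
      intro i
      rw [hGi i]
      exact det_psd_le (psd_tmul (Ci i)) (hQF i)
    have hdetGi0 : ∀ i, 0 ≤ (G.toSquareBlock g0 i).det := by
      intro i
      rw [hGi i]
      exact psd_det_nonneg (psd_tmul (Ci i))
    -- cardinalities
    have hksum : ∑ i : Fin p, k i = t := by
      rw [hk]
      rw [← Fintype.card_sigma, Fintype.card_congr (Equiv.sigmaFiberEquiv g0), Fintype.card_fin]
    have hkle : ∀ i, k i ≤ d i := fun i => by
      have := Fintype.card_le_of_injective _ (hsnd_inj i)
      simpa using this
    have hnotfull : ∃ i₀ : Fin p, i₀ ≤ r ∧ k i₀ < d i₀ := by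
      by_contra hcon
      push_neg at hcon
      have hsub : Bset ⊆ I.1 := by
        intro j hj
        have hjlt : (j : ℕ) < t := by simpa [hBset] using hj
        have hi : (e.symm j).1 ≤ r := (hE2 j).mpr hjlt
        have hcard_eq : k ((e.symm j).1) = d ((e.symm j).1) :=
          le_antisymm (hkle _) (hcon _ hi)
        have hbij : Function.Bijective (snd ((e.symm j).1)) :=
          (Fintype.bijective_iff_injective_and_card _).mpr
            ⟨hsnd_inj _, by rw [show Fintype.card {a : Fin t // g0 a = (e.symm j).1} = k ((e.symm j).1) from rfl, hcard_eq, Fintype.card_fin]⟩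
        obtain ⟨a, ha⟩ := hbij.2 ((e.symm j).2)
        have hja : monoI a.1 = j := by
          rw [hsnd _ a, ha]
          change e ⟨(e.symm j).1, (e.symm j).2⟩ = j
          rw [Sigma.eta]
          exact e.apply_symm_apply j
        rw [← hja]
        exact hmonoI_mem a.1
      exact hI (Finset.eq_of_subset_of_card_le hsub (by rw [I.2, hBcard])).symm
    -- antitonicity of τ
    have hstepτ : ∀ n : ℕ, ∀ h : n + 1 < p,
        τ ⟨n+1, h⟩ ≤ τ ⟨n, Nat.lt_of_succ_lt h⟩ := by
      intro n h
      have := hgap ⟨n, Nat.lt_of_succ_lt h⟩ h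
      have h2 : τ ⟨n+1, h⟩ + ε < τ ⟨n, Nat.lt_of_succ_lt h⟩ - ε := this
      linarith
    have hchain : ∀ (m n : ℕ) (hm : m < p) (hn : n < p), m ≤ n → τ ⟨n, hn⟩ ≤ τ ⟨m, hm⟩ := by
      intro m n hm hn hmn
      induction n with
      | zero =>
        have hm0 : m = 0 := Nat.le_zero.mp hmn
        subst hm0
        exact le_refl _
      | succ n ih =>
        rcases Nat.lt_or_ge m (n+1) with hlt | hge
        · have hmn' : m ≤ n := Nat.lt_succ_iff.mp hlt
          have hn' : n < p := Nat.lt_of_succ_lt hn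
          exact le_trans (hstepτ n hn) (ih hn' hmn')
        · have hmeq : m = n+1 := le_antisymm hmn hge
          subst hmeq
          exact le_refl _
    obtain ⟨i₀, hi₀r, hi₀lt⟩ := hnotfull
    have hτle : ∀ i : Fin p, i ≤ r → τ r ≤ τ i := by
      intro i hi
      have := hchain i.1 r.1 i.2 r.2 hi
      simpa using this
    have hτge : ∀ i : Fin p, ¬(i ≤ r) → τ i ≤ τ ⟨(r:ℕ)+1, hr⟩ := by
      intro i hi
      have hri : r.1 + 1 ≤ i.1 := Nat.succ_le_of_lt (not_le.mp hi)
      have := hchain (r.1+1) i.1 hr i.2 hri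
      simpa using this
    -- arithmetic
    have htR : (t : ℝ) = ∑ i ∈ Finset.univ.filter (fun i => i ≤ r), (d i : ℝ) := by
      rw [ht]; push_cast; rfl
    have hksumR : (∑ i : Fin p, (k i : ℝ)) = (t : ℝ) := by
      rw [← hksum]; push_cast; rfl
    have hkleR : ∀ i, (k i : ℝ) ≤ (d i : ℝ) := fun i => Nat.cast_le.mpr (hkle i)
    have harith : ∑ i : Fin p, (k i : ℝ) * τ i ≤ Γ + τ ⟨(r:ℕ)+1, hr⟩ - τ r := by
      set F := Finset.univ.filter (fun i : Fin p => i ≤ r) with hF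
      set m : ℝ := ∑ i ∈ F, ((d i : ℝ) - k i) with hm
      have hm1 : 1 ≤ m := by
        have h0 : (1:ℝ) ≤ (d i₀ : ℝ) - k i₀ := by
          have h1 : k i₀ + 1 ≤ d i₀ := hi₀lt
          have h2 : ((k i₀ + 1 : ℕ) : ℝ) ≤ (d i₀ : ℝ) := Nat.cast_le.mpr h1
          push_cast at h2
          linarith
        refine le_trans h0 (Finset.single_le_sum (f := fun i => (d i : ℝ) - k i)
          (fun i _ => by
            have := hkleR i
            show (0:ℝ) ≤ (d i : ℝ) - (k i : ℝ)
            linarith) (by simp [hF, hi₀r]))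
      have hsplit := Finset.sum_filter_add_sum_filter_not Finset.univ
        (fun i : Fin p => i ≤ r) (fun i => (k i : ℝ))
      have hnotsum : ∑ i ∈ Finset.univ.filter (fun i => ¬ i ≤ r), (k i : ℝ) = m := by
        have hFd : ∑ i ∈ F, (d i : ℝ) = (t : ℝ) := htR.symm
        have hsum2 : ∑ i ∈ F, (k i : ℝ) + ∑ i ∈ Finset.univ.filter (fun i => ¬ i ≤ r), (k i : ℝ)
            = (t : ℝ) := by rw [hsplit]; exact hksumR
        rw [hm, Finset.sum_sub_distrib]
        linarith
      have hbound1 : ∑ i ∈ F, (k i : ℝ) * τ i ≤ Γ - m * τ r := by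
        have h1 : ∑ i ∈ F, (k i : ℝ) * τ i
            = ∑ i ∈ F, (d i : ℝ) * τ i - ∑ i ∈ F, ((d i : ℝ) - k i) * τ i := by
          rw [← Finset.sum_sub_distrib]
          refine Finset.sum_congr rfl fun i _ => by ring
        have h2 : ∑ i ∈ F, ((d i : ℝ) - k i) * τ r ≤ ∑ i ∈ F, ((d i : ℝ) - k i) * τ i := by
          refine Finset.sum_le_sum fun i hi => ?_
          have hir : i ≤ r := by simpa [hF] using hi
          exact mul_le_mul_of_nonneg_left (hτle i hir) (by have := hkleR i; linarith)
        have h3 : ∑ i ∈ F, ((d i : ℝ) - k i) * τ r = m * τ r := by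
          rw [hm, ← Finset.sum_mul]
        rw [h1, ← hΓ]
        linarith
      have hbound2 : ∑ i ∈ Finset.univ.filter (fun i => ¬ i ≤ r), (k i : ℝ) * τ i
          ≤ m * τ ⟨(r:ℕ)+1, hr⟩ := by
        calc ∑ i ∈ Finset.univ.filter (fun i => ¬ i ≤ r), (k i : ℝ) * τ i
            ≤ ∑ i ∈ Finset.univ.filter (fun i => ¬ i ≤ r), (k i : ℝ) * τ ⟨(r:ℕ)+1, hr⟩ := by
              refine Finset.sum_le_sum fun i hi => ?_
              exact mul_le_mul_of_nonneg_left (hτge i (by simpa using hi)) (Nat.cast_nonneg _)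
        _ = m * τ ⟨(r:ℕ)+1, hr⟩ := by rw [← Finset.sum_mul, hnotsum]
      have hgapr := hgap r hr
      have hτdiff : τ ⟨(r:ℕ)+1, hr⟩ - τ r ≤ 0 := by linarith
      calc ∑ i : Fin p, (k i : ℝ) * τ i
          = ∑ i ∈ F, (k i : ℝ) * τ i
            + ∑ i ∈ Finset.univ.filter (fun i => ¬ i ≤ r), (k i : ℝ) * τ i :=
            (Finset.sum_filter_add_sum_filter_not Finset.univ _ _).symm
      _ ≤ (Γ - m * τ r) + m * τ ⟨(r:ℕ)+1, hr⟩ := add_le_add hbound1 hbound2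
      _ = Γ + m * (τ ⟨(r:ℕ)+1, hr⟩ - τ r) := by ring
      _ ≤ Γ + 1 * (τ ⟨(r:ℕ)+1, hr⟩ - τ r) := by nlinarith
      _ = Γ + τ ⟨(r:ℕ)+1, hr⟩ - τ r := by ring
    -- final chain
    have hdetle : G.det ≤ (Real.exp (∑ i : Fin p, (k i : ℝ) * (τ i + ε)))^2 := by
      rw [hdet2]
      calc ∏ i : Fin p, (G.toSquareBlock g0 i).det
          ≤ ∏ i : Fin p, ((Real.exp (τ i + ε))^2) ^ (k i) :=
            Finset.prod_le_prod (fun i _ => hdetGi0 i) (fun i _ => hdetGi i)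
      _ = (∏ i : Fin p, (Real.exp (τ i + ε)) ^ (k i))^2 := by
            rw [← Finset.prod_pow]
            exact Finset.prod_congr rfl fun i _ => by ring
      _ = (Real.exp (∑ i : Fin p, (k i : ℝ) * (τ i + ε)))^2 := by
            congr 1
            rw [Real.exp_sum]
            exact Finset.prod_congr rfl fun i _ => (Real.exp_nat_mul _ _).symm
    have hXle : ∑ i : Fin p, (k i : ℝ) * (τ i + ε) ≤ Γ + τ ⟨(r:ℕ)+1, hr⟩ - τ r + t * ε := by
      have hexpand : ∑ i : Fin p, (k i : ℝ) * (τ i + ε)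
          = ∑ i : Fin p, (k i : ℝ) * τ i + (∑ i : Fin p, (k i : ℝ)) * ε := by
        simp_rw [mul_add]
        rw [Finset.sum_add_distrib, ← Finset.sum_mul]
      rw [hexpand, hksumR]
      linarith
    rw [hnorm, hsum]
    calc Real.sqrt (Bm.transpose * Bm).det
        ≤ Real.sqrt ((Real.exp (∑ i : Fin p, (k i : ℝ) * (τ i + ε)))^2) :=
          Real.sqrt_le_sqrt hdetle
    _ = Real.exp (∑ i : Fin p, (k i : ℝ) * (τ i + ε)) :=
          Real.sqrt_sq (Real.exp_pos _).le
    _ ≤ Real.exp (Γ + τ ⟨(r:ℕ)+1, hr⟩ - τ r + t * ε) := Real.exp_le_exp.mpr hXle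
end

section
/- Let V be a finite-dimensional inner product space, A : V → V linear, v ∈ V nonzero, and λ > 0, with Av = λv and ‖A restricted to v^⊥‖ < λ/18. Then A maps the cone 𝒞(v,1/2) into 𝒞(v,1/5), where 𝒞(v,r) = { w ∈ V : (v|w) ≥ (1−r)|v||w| }. -/
open scoped RealInnerProductSpace

/-- The `r`-cone around a nonzero vector `v`:
`𝒞(v,r) = { w : (v|w) ≥ (1−r)|v||w| }`. -/
def rCone {V : Type*} [NormedAddCommGroup V] [InnerProductSpace ℝ V] (v : V) (r : ℝ) : Set V :=
  {w | (1 - r) * ‖v‖ * ‖w‖ ≤ ⟪v, w⟫}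

/-- If `Av = λv` with `λ > 0` and the norm of the restriction of `A` to `v^⊥`
is `< λ/18`, then `A` maps `𝒞(v,1/2)` into `𝒞(v,1/5)`. -/
theorem cone_condition_of_dominant_eigenvector
    {V : Type*} [NormedAddCommGroup V] [InnerProductSpace ℝ V] [FiniteDimensional ℝ V]
    (A : V →L[ℝ] V) (v : V) (hv : v ≠ 0) (lam : ℝ) (hlam : 0 < lam)
    (heig : A v = lam • v)
    (hperp : ‖A.comp (Submodule.subtypeL (ℝ ∙ v)ᗮ)‖ < lam / 18) :
    Set.MapsTo A (rCone v (1/2)) (rCone v (1/5)) := by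
  intro w hw
  have hw' : (1 - 1/2) * ‖v‖ * ‖w‖ ≤ ⟪v, w⟫ := hw
  have hvpos : (0:ℝ) < ‖v‖ := norm_pos_iff.mpr hv
  set ε : ℝ := ‖A.comp (Submodule.subtypeL (ℝ ∙ v)ᗮ)‖ with hε
  have hεnn : 0 ≤ ε := by rw [hε]; exact norm_nonneg (A.comp (Submodule.subtypeL (ℝ ∙ v)ᗮ))
  set c : ℝ := ⟪v, w⟫ / (‖v‖^2) with hc
  set u : V := w - c • v with hu
  have hvu : ⟪v, u⟫ = 0 := by
    simp only [hu, inner_sub_right, real_inner_smul_right, hc,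
      real_inner_self_eq_norm_sq]
    field_simp
    ring
  have hmem : u ∈ (ℝ ∙ v)ᗮ :=
    Submodule.mem_orthogonal_singleton_iff_inner_right.mpr hvu
  have hAu : ‖A u‖ ≤ ε * ‖u‖ := by
    have := (A.comp (Submodule.subtypeL (ℝ ∙ v)ᗮ)).le_opNorm ⟨u, hmem⟩
    simpa using this
  have hc0 : 0 ≤ c := by
    apply div_nonneg _ (by positivity)
    nlinarith [norm_nonneg w]
  have hdecomp : w = c • v + u := by simp [hu]
  have hcv : ‖w‖ / 2 ≤ c * ‖v‖ := by
    have : c * ‖v‖^2 = ⟪v, w⟫ := by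
      rw [hc, div_mul_cancel₀ _ (pow_pos hvpos 2).ne']
    nlinarith [hw']
  have hnu : ‖u‖ ≤ ‖w‖ := by
    have hsq : ‖w‖^2 = ‖c • v‖^2 + 2 * ⟪c • v, u⟫ + ‖u‖^2 := by
      rw [hdecomp]; exact norm_add_sq_real _ _
    have : ⟪c • v, u⟫ = 0 := by rw [real_inner_smul_left, hvu]; ring
    nlinarith [norm_nonneg (c • v), norm_nonneg u, norm_nonneg w]
  have hAw : A w = (c * lam) • v + A u := by
    rw [hdecomp, map_add, map_smul, heig, smul_smul]
  have h1 : ⟪v, A w⟫ = c * lam * ‖v‖^2 + ⟪v, A u⟫ := by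
    rw [hAw, inner_add_right, real_inner_smul_right, real_inner_self_eq_norm_sq]
  have h2 : ‖A w‖ ≤ c * lam * ‖v‖ + ‖A u‖ := by
    rw [hAw]
    refine (norm_add_le _ _).trans ?_
    rw [norm_smul, Real.norm_eq_abs, abs_of_nonneg (by positivity)]
  have h3 : |⟪v, A u⟫| ≤ ‖v‖ * ‖A u‖ := abs_real_inner_le_norm v (A u)
  show (1 - 1/5) * ‖v‖ * ‖A w‖ ≤ ⟪v, A w⟫
  rw [h1]
  have hAu' : 9 * ‖A u‖ ≤ (lam / 2) * ‖w‖ := by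
    nlinarith [norm_nonneg u, norm_nonneg w]
  have habs := (abs_le.mp h3).1
  nlinarith [norm_nonneg (A w), norm_nonneg (A u), norm_nonneg w,
    mul_le_mul_of_nonneg_left h2 (le_of_lt hvpos),
    mul_le_mul_of_nonneg_left hcv (le_of_lt (mul_pos hlam hvpos))]
end
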